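/- For every N ≥ 2, the word 01001·∏_{n=2}^{N}(f_n·f_{n-1}·f_n) is a prefix of the Fibonacci infinite word f. In other words, f = 01001·∏_{n≥2} f_n f_{n-1} f_n. -/
import Mathlib


/-- The finite Fibonacci words over the alphabet {0,1}: f 1 = 1, f 2 = 0,
and f n = f (n-1) ++ f (n-2) for n ≥ 3. -/
def fibWord : ℕ → List ℕ
  | 0 => []
  | 1 => [1]
  | 2 => [0]
  | n + 3 => fibWord (n + 2) ++ fibWord (n + 1)

/-- A finite word is a prefix of the Fibonacci infinite word iff it is a
prefix of some finite Fibonacci word f m with m ≥ 2. -/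
def IsFibPrefix (x : List ℕ) : Prop := ∃ m, 2 ≤ m ∧ x <+: fibWord m

lemma key (n : ℕ) :
    ([0, 1, 0, 0, 1] ++
      ((List.range n).map
        (fun i => fibWord (i + 2) ++ fibWord (i + 1) ++ fibWord (i + 2))).flatten)
      = fibWord (n + 5) := by
  induction n with
  | zero => rfl
  | succ n ih =>
      rw [List.range_succ, List.map_append, List.flatten_append, ← List.append_assoc, ih]
      show fibWord (n + 5) ++ (fibWord (n + 2) ++ fibWord (n + 1) ++ fibWord (n + 2) ++ []) =
        fibWord (n + 6)
      have h6 : fibWord (n + 6) = fibWord (n + 5) ++ fibWord (n + 4) := rfl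
      have h4 : fibWord (n + 4) = fibWord (n + 3) ++ fibWord (n + 2) := rfl
      have h3 : fibWord (n + 3) = fibWord (n + 2) ++ fibWord (n + 1) := rfl
      simp [h6, h4, h3]

theorem stmt1 (N : ℕ) (hN : 2 ≤ N) :
    IsFibPrefix ([0, 1, 0, 0, 1] ++
      ((List.range (N - 1)).map
        (fun i => fibWord (i + 2) ++ fibWord (i + 1) ++ fibWord (i + 2))).flatten) := by
  obtain ⟨m, rfl⟩ : ∃ m, N = m + 1 := ⟨N - 1, by omega⟩
  simp only [Nat.add_sub_cancel]
  exact ⟨m + 5, by omega, (key m).symm ▸ List.prefix_refl _⟩
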